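/- (Polygonal Confinement Theorem, Steinitz) For each positive integer d there exists a constant C_d such that: for every positive integer n and all vectors v_m ∈ ℝ^d (m < n), if Σ_{m<n} v_m = 0 and ‖v_m‖ ≤ 1 for all m < n, then there is a permutation p of {1, …, n−1} such that ‖v_0 + Σ_{m∈k∖{0}} v_{p(m)}‖ ≤ C_d for every k ≤ n. -/

import Mathlib

open Finset

lemma steinitz_reduce_aux (d : ℕ) (v : ℕ → EuclideanSpace ℝ (Fin d)) (A : Finset ℕ) (c : ℝ) :
    ∀ N : ℕ, ∀ lam : ℕ → ℝ,
    (A.filter (fun i => lam i ≠ 0 ∧ lam i ≠ 1)).card ≤ N →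
    (∀ i ∈ A, lam i ∈ Set.Icc (0:ℝ) 1) →
    (∑ i ∈ A, lam i = c) → (∑ i ∈ A, lam i • v i = 0) →
    ∃ mu : ℕ → ℝ, (∀ i ∈ A, mu i ∈ Set.Icc (0:ℝ) 1) ∧ (∑ i ∈ A, mu i = c) ∧
      (∑ i ∈ A, mu i • v i = 0) ∧ (A.filter (fun i => mu i ≠ 0 ∧ mu i ≠ 1)).card ≤ d + 1 := by
  intro N
  induction N with
  | zero =>
    intro lam hcard h01 hsum hv
    exact ⟨lam, h01, hsum, hv, le_trans hcard (Nat.zero_le _)⟩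
  | succ N ih =>
    intro lam hcard h01 hsum hv
    by_cases hdone : (A.filter (fun i => lam i ≠ 0 ∧ lam i ≠ 1)).card ≤ d + 1
    · exact ⟨lam, h01, hsum, hv, hdone⟩
    push_neg at hdone
    set F : Finset ℕ := A.filter (fun i => lam i ≠ 0 ∧ lam i ≠ 1) with hFdef
    have hFA : F ⊆ A := filter_subset _ _
    have hFcard : d + 2 ≤ F.card := hdone
    -- the linear map
    let T : (↥F → ℝ) →ₗ[ℝ] ℝ × EuclideanSpace ℝ (Fin d) :=
      { toFun := fun x => (∑ i, x i, ∑ i, x i • v (i : ℕ)),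
        map_add' := by
          intro x y
          simp [Prod.ext_iff, add_smul, Finset.sum_add_distrib]
        map_smul' := by
          intro a x
          simp [Prod.ext_iff, mul_smul, Finset.mul_sum, Finset.smul_sum] }
    have hnotinj : ¬ Function.Injective T := by
      intro hinj
      have h1 := LinearMap.finrank_le_finrank_of_injective hinj
      rw [Module.finrank_fintype_fun_eq_card, Module.finrank_prod,
        Module.finrank_self, finrank_euclideanSpace_fin, Fintype.card_coe] at h1
      omega
    obtain ⟨a, b, hab, hne⟩ := Function.not_injective_iff.mp hnotinj
    set z : ↥F → ℝ := a - b with hzdef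
    have hz0 : z ≠ 0 := sub_ne_zero.mpr hne
    have hTz : T z = 0 := by rw [hzdef, map_sub, hab, sub_self]
    -- extend z to ℕ
    set x : ℕ → ℝ := fun i => if h : i ∈ F then z ⟨i, h⟩ else 0 with hxdef
    have hxF : ∀ i ∉ F, x i = 0 := by
      intro i hi; simp [hxdef, hi]
    have hxsumF : ∑ i ∈ F, x i = 0 := by
      have : ∑ i ∈ F, x i = ∑ i : ↥F, z i := by
        rw [← Finset.sum_attach F x]
        refine Finset.sum_congr rfl fun i _ => ?_
        simp [hxdef, i.2]
      rw [this]
      have := congrArg Prod.fst hTz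
      simpa [T] using this
    have hxvF : ∑ i ∈ F, x i • v i = 0 := by
      have : ∑ i ∈ F, x i • v i = ∑ i : ↥F, z i • v (i : ℕ) := by
        rw [← Finset.sum_attach F (fun i => x i • v i)]
        refine Finset.sum_congr rfl fun i _ => ?_
        simp [hxdef, i.2]
      rw [this]
      have := congrArg Prod.snd hTz
      simpa [T] using this
    have hxsumA : ∑ i ∈ A, x i = 0 := by
      rw [← Finset.sum_subset hFA (fun i _ hi => hxF i hi)]; exact hxsumF
    have hxvA : ∑ i ∈ A, x i • v i = 0 := by
      rw [← Finset.sum_subset hFA (fun i _ hi => by rw [hxF i hi, zero_smul])]; exact hxvF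
    -- the step size
    set S : Finset ℕ := F.filter (fun i => x i ≠ 0) with hSdef
    have hSne : S.Nonempty := by
      obtain ⟨j, hj⟩ := Function.ne_iff.mp hz0
      refine ⟨(j : ℕ), mem_filter.mpr ⟨j.2, ?_⟩⟩
      simpa [hxdef, j.2] using hj
    have hfrac : ∀ i ∈ F, 0 < lam i ∧ lam i < 1 := by
      intro i hi
      obtain ⟨hiA, h0, h1⟩ := mem_filter.mp hi
      obtain ⟨hl, hu⟩ := h01 i hiA
      exact ⟨lt_of_le_of_ne hl (Ne.symm h0), lt_of_le_of_ne hu h1⟩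
    set t : ℕ → ℝ := fun i => if 0 < x i then (1 - lam i) / x i else lam i / (-x i) with htdef
    have htpos : ∀ i ∈ S, 0 < t i := by
      intro i hi
      obtain ⟨hiF, hxi⟩ := mem_filter.mp hi
      obtain ⟨hl, hu⟩ := hfrac i hiF
      rcases lt_or_gt_of_ne hxi with hneg | hpos
      · rw [htdef]; simp only [not_lt.mpr (le_of_lt hneg), if_neg (not_lt.mpr (le_of_lt hneg))]
        exact div_pos hl (by linarith)
      · rw [htdef]; simp only [if_pos hpos]
        exact div_pos (by linarith) hpos
    set tm : ℝ := S.inf' hSne t with htm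
    have htmpos : 0 < tm := (Finset.lt_inf'_iff hSne).mpr htpos
    have htmle : ∀ i ∈ S, tm ≤ t i := fun i hi => Finset.inf'_le t hi
    set mu : ℕ → ℝ := fun i => lam i + tm * x i with hmudef
    -- key pointwise bounds
    have hmu_eq : ∀ i ∉ S, i ∈ A → mu i = lam i := by
      intro i hi hiA
      by_cases hiF : i ∈ F
      · have : x i = 0 := by
          by_contra hxi; exact hi (mem_filter.mpr ⟨hiF, hxi⟩)
        simp [hmudef, this]
      · simp [hmudef, hxF i hiF]
    have hmu01 : ∀ i ∈ A, mu i ∈ Set.Icc (0:ℝ) 1 := by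
      intro i hiA
      by_cases hiS : i ∈ S
      · obtain ⟨hiF, hxi⟩ := mem_filter.mp hiS
        obtain ⟨hl, hu⟩ := hfrac i hiF
        have hle := htmle i hiS
        rcases lt_or_gt_of_ne hxi with hneg | hpos
        · have ht : t i = lam i / (-x i) := by
            rw [htdef]; simp [not_lt.mpr (le_of_lt hneg)]
          have hxne : x i ≠ 0 := ne_of_lt hneg
          constructor
          · have : t i * x i = -lam i := by
              rw [ht, div_mul_eq_mul_div, div_neg, mul_div_assoc, div_self hxne, mul_one]
            have h2 : tm * x i ≥ t i * x i := by
              exact mul_le_mul_of_nonpos_right hle (le_of_lt hneg)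
            simp only [hmudef]
            rw [this] at h2; linarith
          · have : tm * x i ≤ 0 := mul_nonpos_of_nonneg_of_nonpos (le_of_lt htmpos) (le_of_lt hneg)
            simp only [hmudef]; linarith
        · have ht : t i = (1 - lam i) / x i := by rw [htdef]; simp [hpos]
          constructor
          · have : 0 ≤ tm * x i := mul_nonneg (le_of_lt htmpos) (le_of_lt hpos)
            simp only [hmudef]; linarith
          · have h2 : tm * x i ≤ t i * x i := mul_le_mul_of_nonneg_right hle (le_of_lt hpos)
            have : t i * x i = 1 - lam i := by rw [ht]; field_simp
            rw [this] at h2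
            simp only [hmudef]; linarith
      · rw [hmu_eq i hiS hiA]; exact h01 i hiA
    have hmusum : ∑ i ∈ A, mu i = c := by
      simp only [hmudef]
      rw [Finset.sum_add_distrib, hsum, ← Finset.mul_sum, hxsumA, mul_zero, add_zero]
    have hmuv : ∑ i ∈ A, mu i • v i = 0 := by
      have : ∀ i, (lam i + tm * x i) • v i = lam i • v i + tm • (x i • v i) := by
        intro i; rw [add_smul, smul_smul]
      simp only [hmudef, this]
      rw [Finset.sum_add_distrib, hv, ← Finset.smul_sum, hxvA, smul_zero, add_zero]
    -- fractional count strictly decreases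
    obtain ⟨i0, hi0S, hi0eq⟩ := Finset.exists_mem_eq_inf' hSne t
    have hi0F : i0 ∈ F := (mem_filter.mp hi0S).1
    have hi0int : mu i0 = 0 ∨ mu i0 = 1 := by
      obtain ⟨hiF, hxi⟩ := mem_filter.mp hi0S
      rcases lt_or_gt_of_ne hxi with hneg | hpos
      · left
        have ht : t i0 = lam i0 / (-x i0) := by
          rw [htdef]; simp [not_lt.mpr (le_of_lt hneg)]
        simp only [hmudef]
        have hxne : x i0 ≠ 0 := ne_of_lt hneg
        rw [← htm] at hi0eq
        rw [hi0eq, ht, div_mul_eq_mul_div, div_neg, mul_div_assoc, div_self hxne, mul_one]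
        ring
      · right
        have ht : t i0 = (1 - lam i0) / x i0 := by rw [htdef]; simp [hpos]
        simp only [hmudef]
        rw [← htm] at hi0eq
        rw [hi0eq, ht]; field_simp; ring
    have hsubset : A.filter (fun i => mu i ≠ 0 ∧ mu i ≠ 1) ⊆ F.erase i0 := by
      intro i hi
      obtain ⟨hiA, hmu0, hmu1⟩ := mem_filter.mp hi
      have hiF : i ∈ F := by
        by_contra hiF
        have hx0 : x i = 0 := hxF i hiF
        have : mu i = lam i := by simp [hmudef, hx0]
        rw [this] at hmu0 hmu1
        exact hiF (mem_filter.mpr ⟨hiA, hmu0, hmu1⟩)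
      refine mem_erase.mpr ⟨?_, hiF⟩
      rintro rfl
      rcases hi0int with h | h
      · exact hmu0 h
      · exact hmu1 h
    have hcard' : (A.filter (fun i => mu i ≠ 0 ∧ mu i ≠ 1)).card ≤ N := by
      have h1 := Finset.card_le_card hsubset
      have h2 : (F.erase i0).card = F.card - 1 := Finset.card_erase_of_mem hi0F
      omega
    exact ih mu hcard' hmu01 hmusum hmuv

def SteinitzGood (d : ℕ) (v : ℕ → EuclideanSpace ℝ (Fin d)) (A : Finset ℕ) : Prop :=
  ∃ lam : ℕ → ℝ, (∀ i ∈ A, lam i ∈ Set.Icc (0:ℝ) 1) ∧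
    (∑ i ∈ A, lam i = (A.card : ℝ) - d) ∧ (∑ i ∈ A, lam i • v i = 0)


lemma steinitz_step (d : ℕ) (v : ℕ → EuclideanSpace ℝ (Fin d)) (A : Finset ℕ)
    (hA : SteinitzGood d v A) (hcard : d < A.card) :
    ∃ i ∈ A, SteinitzGood d v (A.erase i) := by
  obtain ⟨lam, h01, hsum, hv⟩ := hA
  have hc1 : (1:ℝ) ≤ (A.card : ℝ) - d := by
    have : (d:ℝ) + 1 ≤ A.card := by exact_mod_cast hcard
    linarith
  have hcpos : (0:ℝ) < (A.card : ℝ) - d := by linarith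
  set r : ℝ := ((A.card : ℝ) - 1 - d) / ((A.card : ℝ) - d) with hr
  have hr0 : 0 ≤ r := div_nonneg (by linarith) (le_of_lt hcpos)
  have hr1 : r ≤ 1 := by
    rw [hr, div_le_one hcpos]; linarith
  set lam' : ℕ → ℝ := fun i => r * lam i with hlam'
  have h01' : ∀ i ∈ A, lam' i ∈ Set.Icc (0:ℝ) 1 := by
    intro i hi
    obtain ⟨hl, hu⟩ := h01 i hi
    exact ⟨mul_nonneg hr0 hl, le_trans (mul_le_mul hr1 hu hl zero_le_one) (by norm_num)⟩
  have hsum' : ∑ i ∈ A, lam' i = (A.card : ℝ) - 1 - d := by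
    simp only [hlam', ← Finset.mul_sum, hsum]
    rw [hr, div_mul_cancel₀ _ (ne_of_gt hcpos)]
  have hv' : ∑ i ∈ A, lam' i • v i = 0 := by
    simp only [hlam', mul_smul, ← Finset.smul_sum, hv, smul_zero]
  obtain ⟨mu, hmu01, hmusum, hmuv, hmufrac⟩ :=
    steinitz_reduce_aux d v A ((A.card : ℝ) - 1 - d)
      ((A.filter (fun i => lam' i ≠ 0 ∧ lam' i ≠ 1)).card) lam' le_rfl h01' hsum' hv'
  -- find a zero coordinate
  have hzero : ∃ i ∈ A, mu i = 0 := by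
    by_contra h
    push_neg at h
    set F' : Finset ℕ := A.filter (fun i => mu i ≠ 0 ∧ mu i ≠ 1) with hF'
    have hF'A : F' ⊆ A := filter_subset _ _
    have hones : ∀ i ∈ A \ F', mu i = 1 := by
      intro i hi
      obtain ⟨hiA, hiF⟩ := Finset.mem_sdiff.mp hi
      by_contra h1
      exact hiF (mem_filter.mpr ⟨hiA, h i hiA, h1⟩)
    have hsplit : ∑ i ∈ A, mu i = ∑ i ∈ A \ F', mu i + ∑ i ∈ F', mu i :=
      (Finset.sum_sdiff hF'A).symm
    have h1 : ∑ i ∈ A \ F', mu i = ((A \ F').card : ℝ) := by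
      rw [Finset.sum_congr rfl hones]; simp
    have hcards : ((A \ F').card : ℝ) = (A.card : ℝ) - F'.card := by
      rw [Finset.card_sdiff_of_subset hF'A]
      exact_mod_cast Nat.cast_sub (Finset.card_le_card hF'A)
    have hF'sum : ∑ i ∈ F', mu i = (F'.card : ℝ) - 1 - d := by
      rw [hsplit, h1, hcards] at hmusum; linarith
    have hF'nonneg : (0:ℝ) ≤ ∑ i ∈ F', mu i :=
      Finset.sum_nonneg fun i hi => (hmu01 i (hF'A hi)).1
    have hF'le : (F'.card : ℝ) ≤ (d:ℝ) + 1 := by exact_mod_cast hmufrac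
    have hF'eq : ∑ i ∈ F', mu i = 0 := le_antisymm (by rw [hF'sum]; linarith) hF'nonneg
    have hF'ne : F'.Nonempty := by
      rcases Finset.eq_empty_or_nonempty F' with he | hne
      · rw [he] at hF'sum
        simp at hF'sum
        have : (0:ℝ) ≤ d := Nat.cast_nonneg d
        linarith
      · exact hne
    obtain ⟨i, hi⟩ := hF'ne
    have : mu i > 0 := lt_of_le_of_ne (hmu01 i (hF'A hi)).1 (Ne.symm (h i (hF'A hi)))
    have : 0 < ∑ j ∈ F', mu j :=
      Finset.sum_pos' (fun j hj => (hmu01 j (hF'A hj)).1) ⟨i, hi, this⟩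
    linarith [hF'eq]
  obtain ⟨i, hiA, hmui⟩ := hzero
  refine ⟨i, hiA, mu, fun j hj => hmu01 j (Finset.mem_of_mem_erase hj), ?_, ?_⟩
  · have : ∑ j ∈ A.erase i, mu j = ∑ j ∈ A, mu j - mu i := by
      rw [← Finset.add_sum_erase A mu hiA]; ring
    rw [this, hmusum, hmui, Finset.card_erase_of_mem hiA]
    have h1 : 1 ≤ A.card := lt_of_le_of_lt (Nat.zero_le d) hcard
    rw [Nat.cast_sub h1]
    push_cast; ring
  · have : ∑ j ∈ A.erase i, mu j • v j = ∑ j ∈ A, mu j • v j - mu i • v i := by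
      rw [← Finset.add_sum_erase A (fun j => mu j • v j) hiA]; abel
    rw [this, hmuv, hmui, zero_smul, sub_zero]

lemma steinitz_good_bound (d : ℕ) (v : ℕ → EuclideanSpace ℝ (Fin d)) (A : Finset ℕ)
    (hA : SteinitzGood d v A) (hv1 : ∀ i ∈ A, ‖v i‖ ≤ 1) :
    ‖∑ i ∈ A, v i‖ ≤ d := by
  obtain ⟨lam, h01, hsum, hv⟩ := hA
  have key : ∑ i ∈ A, v i = ∑ i ∈ A, (1 - lam i) • v i := by
    have : ∀ i ∈ A, (1 - lam i) • v i = v i - lam i • v i := by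
      intro i _; rw [sub_smul, one_smul]
    rw [Finset.sum_congr rfl this, Finset.sum_sub_distrib, hv, sub_zero]
  rw [key]
  calc ‖∑ i ∈ A, (1 - lam i) • v i‖ ≤ ∑ i ∈ A, ‖(1 - lam i) • v i‖ := norm_sum_le _ _
    _ ≤ ∑ i ∈ A, (1 - lam i) := by
        refine Finset.sum_le_sum fun i hi => ?_
        rw [norm_smul, Real.norm_eq_abs, abs_of_nonneg (by linarith [(h01 i hi).2])]
        obtain ⟨hl, hu⟩ := h01 i hi
        calc (1 - lam i) * ‖v i‖ ≤ (1 - lam i) * 1 :=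
              mul_le_mul_of_nonneg_left (hv1 i hi) (by linarith)
          _ = 1 - lam i := mul_one _
    _ = (A.card : ℝ) - ∑ i ∈ A, lam i := by rw [Finset.sum_sub_distrib]; simp
    _ = d := by rw [hsum]; ring





lemma steinitz_enum_base (d : ℕ) (v : ℕ → EuclideanSpace ℝ (Fin d)) (A : Finset ℕ)
    (hND : A.card ≤ d) (hv1 : ∀ i ∈ A, ‖v i‖ ≤ 1) :
    ∃ σ : ℕ → ℕ, Set.InjOn σ (Set.Iio A.card) ∧ (Finset.range A.card).image σ = A ∧
      ∀ k ≤ A.card, ‖∑ i ∈ Finset.range k, v (σ i)‖ ≤ d := by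
  set N := A.card with hN
  refine ⟨fun i => if h : i < N then ((A.equivFin.symm ⟨i, h⟩ : ↥A) : ℕ) else 0, ?_, ?_, ?_⟩
  · intro i hi j hj hij
    simp only [Set.mem_Iio] at hi hj
    dsimp only at hij
    rw [dif_pos hi, dif_pos hj] at hij
    have := A.equivFin.symm.injective (Subtype.ext hij)
    simpa using this
  · apply Finset.Subset.antisymm
    · intro a ha
      obtain ⟨i, hi, rfl⟩ := Finset.mem_image.mp ha
      have hi' : i < N := Finset.mem_range.mp hi
      rw [dif_pos hi']
      exact (A.equivFin.symm ⟨i, hi'⟩).2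
    · intro a ha
      refine Finset.mem_image.mpr ⟨(A.equivFin ⟨a, ha⟩ : Fin N), Finset.mem_range.mpr (A.equivFin ⟨a, ha⟩).2, ?_⟩
      rw [dif_pos (A.equivFin ⟨a, ha⟩).2]
      simp
  · intro k hk
    calc ‖∑ i ∈ Finset.range k, v (if h : i < N then ((A.equivFin.symm ⟨i, h⟩ : ↥A) : ℕ) else 0)‖
        ≤ ∑ i ∈ Finset.range k, ‖v (if h : i < N then ((A.equivFin.symm ⟨i, h⟩ : ↥A) : ℕ) else 0)‖ :=
          norm_sum_le _ _
      _ ≤ ∑ _i ∈ Finset.range k, (1:ℝ) := by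
          refine Finset.sum_le_sum fun i hi => ?_
          have hi' : i < N := lt_of_lt_of_le (Finset.mem_range.mp hi) hk
          rw [dif_pos hi']
          exact hv1 _ (A.equivFin.symm ⟨i, hi'⟩).2
      _ = k := by simp
      _ ≤ d := by exact_mod_cast le_trans hk hND

lemma steinitz_enum (d : ℕ) (v : ℕ → EuclideanSpace ℝ (Fin d)) :
    ∀ N : ℕ, ∀ A : Finset ℕ, A.card = N → SteinitzGood d v A →
    (∀ i ∈ A, ‖v i‖ ≤ 1) →
    ∃ σ : ℕ → ℕ, Set.InjOn σ (Set.Iio N) ∧ (Finset.range N).image σ = A ∧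
      ∀ k ≤ N, ‖∑ i ∈ Finset.range k, v (σ i)‖ ≤ d := by
  intro N
  induction N with
  | zero =>
    intro A hcard _ hv1
    have := steinitz_enum_base d v A (hcard ▸ Nat.zero_le d) hv1
    rwa [hcard] at this
  | succ N ih =>
    intro A hcard hgood hv1
    by_cases hND : A.card ≤ d
    · have := steinitz_enum_base d v A hND hv1
      rwa [hcard] at this
    push_neg at hND
    obtain ⟨i, hiA, hgood'⟩ := steinitz_step d v A hgood hND
    have hcard' : (A.erase i).card = N := by
      rw [Finset.card_erase_of_mem hiA, hcard]
      omega
    obtain ⟨σ, hinj, himg, hbd⟩ := ih (A.erase i) hcard' hgood'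
      (fun j hj => hv1 j (Finset.mem_of_mem_erase hj))
    refine ⟨fun m => if m = N then i else σ m, ?_, ?_, ?_⟩
    · intro a ha b hb hab
      simp only [Set.mem_Iio] at ha hb
      dsimp only at hab
      by_cases haN : a = N <;> by_cases hbN : b = N
      · omega
      · rw [if_pos haN, if_neg hbN] at hab
        exfalso
        have : σ b ∈ A.erase i := by
          rw [← himg]
          exact Finset.mem_image.mpr ⟨b, Finset.mem_range.mpr (by omega), rfl⟩
        rw [← hab] at this
        exact (Finset.mem_erase.mp this).1 rfl
      · rw [if_neg haN, if_pos hbN] at hab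
        exfalso
        have : σ a ∈ A.erase i := by
          rw [← himg]
          exact Finset.mem_image.mpr ⟨a, Finset.mem_range.mpr (by omega), rfl⟩
        rw [hab] at this
        exact (Finset.mem_erase.mp this).1 rfl
      · rw [if_neg haN, if_neg hbN] at hab
        exact hinj (Set.mem_Iio.mpr (by omega)) (Set.mem_Iio.mpr (by omega)) hab
    · rw [Finset.range_add_one, Finset.image_insert, if_pos rfl]
      have : Finset.image (fun m => if m = N then i else σ m) (Finset.range N)
          = Finset.image σ (Finset.range N) := by
        refine Finset.image_congr fun m hm => ?_
        simp only [Finset.mem_coe, Finset.mem_range] at hm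
        rw [if_neg (by omega)]
      rw [this, himg, Finset.insert_erase hiA]
    · intro k hk
      by_cases hkN : k ≤ N
      · have : ∑ j ∈ Finset.range k, v (if j = N then i else σ j)
            = ∑ j ∈ Finset.range k, v (σ j) := by
          refine Finset.sum_congr rfl fun j hj => ?_
          rw [if_neg (by have := Finset.mem_range.mp hj; omega)]
        rw [this]
        exact hbd k hkN
      · have hkeq : k = N + 1 := by omega
        subst hkeq
        have hsum : ∑ j ∈ Finset.range (N+1), v (if j = N then i else σ j) = ∑ j ∈ A, v j := by
          rw [Finset.sum_range_succ, if_pos rfl]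
          have h1 : ∑ j ∈ Finset.range N, v (if j = N then i else σ j)
              = ∑ j ∈ Finset.range N, v (σ j) := by
            refine Finset.sum_congr rfl fun j hj => ?_
            rw [if_neg (by have := Finset.mem_range.mp hj; omega)]
          rw [h1]
          have h2 : ∑ j ∈ Finset.range N, v (σ j) = ∑ j ∈ A.erase i, v j := by
            rw [← himg, Finset.sum_image]
            intro a ha b hb hab
            exact hinj (Set.mem_Iio.mpr (Finset.mem_range.mp ha))
              (Set.mem_Iio.mpr (Finset.mem_range.mp hb)) hab
          rw [h2, Finset.sum_erase_add A v hiA]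
        rw [hsum]
        exact steinitz_good_bound d v A hgood hv1

/-- The Polygonal Confinement Theorem (Steinitz): for each positive `d` there is a
constant `C` such that any finite family of vectors in `ℝ^d` of norm at most `1`
summing to zero can be rearranged (keeping the first vector first) so that all
partial sums have norm at most `C`. -/
theorem polygonal_confinement (d : ℕ) (hd : 0 < d) :
    ∃ C : ℝ, ∀ n : ℕ, 0 < n → ∀ v : ℕ → EuclideanSpace ℝ (Fin d),
      (∑ m ∈ Finset.range n, v m) = 0 → (∀ m < n, ‖v m‖ ≤ 1) →
      ∃ p : ℕ → ℕ, Set.BijOn p (Set.Ico 1 n) (Set.Ico 1 n) ∧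
        ∀ k ≤ n, ‖v 0 + ∑ m ∈ Finset.Ico 1 k, v (p m)‖ ≤ C := by
  refine ⟨(d : ℝ) + 1, ?_⟩
  intro n hn v hsum hv1
  have hd1 : (0:ℝ) ≤ d := Nat.cast_nonneg d
  by_cases hnd : n ≤ d
  · -- trivial case: identity permutation
    refine ⟨id, Set.bijOn_id _, ?_⟩
    intro k hk
    rcases Nat.eq_zero_or_pos k with rfl | hk0
    · simpa using le_trans (hv1 0 hn) (by linarith)
    have : v 0 + ∑ m ∈ Finset.Ico 1 k, v (id m) = ∑ m ∈ Finset.range k, v m := by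
      rw [Finset.range_eq_Ico, Finset.sum_eq_sum_Ico_succ_bot hk0]
      rfl
    rw [this]
    have hkd : (k:ℝ) ≤ d := by exact_mod_cast le_trans hk hnd
    calc ‖∑ m ∈ Finset.range k, v m‖ ≤ ∑ m ∈ Finset.range k, ‖v m‖ := norm_sum_le _ _
      _ ≤ ∑ _m ∈ Finset.range k, (1:ℝ) :=
          Finset.sum_le_sum fun m hm => hv1 m (lt_of_lt_of_le (Finset.mem_range.mp hm) hk)
      _ = k := by simp
      _ ≤ (d:ℝ) + 1 := by linarith
  · push_neg at hnd
    have hnR : (0:ℝ) < n := by exact_mod_cast hn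
    have hdnR : (d:ℝ) ≤ n := by exact_mod_cast le_of_lt hnd
    have hgood : ∃ lam : ℕ → ℝ, (∀ i ∈ Finset.range n, lam i ∈ Set.Icc (0:ℝ) 1) ∧
        (∑ i ∈ Finset.range n, lam i = ((Finset.range n).card : ℝ) - d) ∧
        (∑ i ∈ Finset.range n, lam i • v i = 0) := by
      refine ⟨fun _ => ((n:ℝ) - d) / n, fun i _ => ?_, ?_, ?_⟩
      · exact ⟨div_nonneg (by linarith) (le_of_lt hnR),
          by rw [div_le_one hnR]; linarith⟩
      · rw [Finset.sum_const, Finset.card_range, nsmul_eq_mul]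
        field_simp
      · rw [← Finset.smul_sum, hsum, smul_zero]
    obtain ⟨σ, hinj, himg, hbd⟩ := steinitz_enum d v n (Finset.range n)
      (Finset.card_range n) hgood (fun i hi => hv1 i (Finset.mem_range.mp hi))
    -- find the position of 0
    have h0mem : (0:ℕ) ∈ Finset.image σ (Finset.range n) := by
      rw [himg]; exact Finset.mem_range.mpr hn
    obtain ⟨j, hjmem, hj0⟩ := Finset.mem_image.mp h0mem
    have hjn : j < n := Finset.mem_range.mp hjmem
    have hσmem : ∀ a < n, σ a < n := by
      intro a ha
      have : σ a ∈ Finset.image σ (Finset.range n) :=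
        Finset.mem_image.mpr ⟨a, Finset.mem_range.mpr ha, rfl⟩
      rw [himg] at this; exact Finset.mem_range.mp this
    have hσne : ∀ a < n, a ≠ j → σ a ≠ 0 := by
      intro a ha haj h0
      exact haj (hinj (Set.mem_Iio.mpr ha) (Set.mem_Iio.mpr hjn) (h0.trans hj0.symm))
    set p : ℕ → ℕ := fun m => if m ≤ j then σ (m - 1) else σ m with hp
    have hparg : ∀ m, 1 ≤ m → m < n → (if m ≤ j then m - 1 else m) < n ∧
        (if m ≤ j then m - 1 else m) ≠ j := by
      intro m h1 h2
      by_cases hmj : m ≤ j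
      · rw [if_pos hmj]; omega
      · rw [if_neg hmj]; omega
    have hpval : ∀ m, p m = σ (if m ≤ j then m - 1 else m) := by
      intro m
      by_cases hmj : m ≤ j
      · simp [hp, hmj]
      · simp [hp, hmj]
    refine ⟨p, ⟨?_, ?_, ?_⟩, ?_⟩
    · -- MapsTo
      intro m hm
      obtain ⟨h1, h2⟩ := hm
      obtain ⟨ha, haj⟩ := hparg m h1 h2
      rw [Set.mem_Ico]
      rw [hpval]
      exact ⟨Nat.one_le_iff_ne_zero.mpr (hσne _ ha haj), hσmem _ ha⟩
    · -- InjOn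
      intro a ha b hb hab
      obtain ⟨ha1, ha2⟩ := ha
      obtain ⟨hb1, hb2⟩ := hb
      rw [hpval, hpval] at hab
      have := hinj (Set.mem_Iio.mpr (hparg a ha1 ha2).1) (Set.mem_Iio.mpr (hparg b hb1 hb2).1) hab
      by_cases haj : a ≤ j <;> by_cases hbj : b ≤ j <;>
        simp only [if_pos, if_neg, haj, hbj, if_true, if_false] at this <;> omega
    · -- SurjOn
      intro y hy
      obtain ⟨hy1, hy2⟩ := hy
      have : y ∈ Finset.image σ (Finset.range n) := by
        rw [himg]; exact Finset.mem_range.mpr hy2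
      obtain ⟨a, hamem, hay⟩ := Finset.mem_image.mp this
      have han : a < n := Finset.mem_range.mp hamem
      have haj : a ≠ j := by
        rintro rfl
        rw [hj0] at hay; omega
      by_cases halt : a < j
      · refine ⟨a + 1, Set.mem_Ico.mpr ⟨by omega, by omega⟩, ?_⟩
        have hc : a + 1 ≤ j := by omega
        rw [hpval, if_pos hc]
        simpa using hay
      · refine ⟨a, Set.mem_Ico.mpr ⟨by omega, han⟩, ?_⟩
        have hc : ¬ a ≤ j := by omega
        rw [hpval, if_neg hc]
        exact hay
    · -- the bound
      intro k hk
      rcases Nat.eq_zero_or_pos k with rfl | hk0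
      · simpa using le_trans (hv1 0 hn) (by linarith)
      by_cases hkj : k ≤ j + 1
      · -- prefix stays before position j
        have hsum1 : ∑ m ∈ Finset.Ico 1 k, v (p m) = ∑ i ∈ Finset.range (k-1), v (σ i) := by
          rw [Finset.sum_Ico_eq_sum_range]
          refine Finset.sum_congr rfl fun i hi => ?_
          have hik : i < k - 1 := Finset.mem_range.mp hi
          have hc : 1 + i ≤ j := by omega
          have he : 1 + i - 1 = i := by omega
          rw [hpval, if_pos hc, he]
        rw [hsum1]
        have hbd1 := hbd (k-1) (by omega)
        calc ‖v 0 + ∑ i ∈ Finset.range (k-1), v (σ i)‖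
            ≤ ‖v 0‖ + ‖∑ i ∈ Finset.range (k-1), v (σ i)‖ := norm_add_le _ _
          _ ≤ 1 + d := add_le_add (hv1 0 hn) hbd1
          _ = (d:ℝ) + 1 := by ring
      · -- prefix covers position j: total is an honest prefix of σ
        push_neg at hkj
        have hsum2 : v 0 + ∑ m ∈ Finset.Ico 1 k, v (p m) = ∑ i ∈ Finset.range k, v (σ i) := by
          have hsplit : Finset.Ico 1 k = Finset.Ico 1 (j+1) ∪ Finset.Ico (j+1) k :=
            (Finset.Ico_union_Ico_eq_Ico (by omega) (by omega)).symm
          have hdisj : Disjoint (Finset.Ico 1 (j+1)) (Finset.Ico (j+1) k) :=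
            Finset.Ico_disjoint_Ico_consecutive 1 (j+1) k
          rw [hsplit, Finset.sum_union hdisj]
          have e1 : ∑ m ∈ Finset.Ico 1 (j+1), v (p m) = ∑ i ∈ Finset.range j, v (σ i) := by
            rw [Finset.sum_Ico_eq_sum_range]
            refine Finset.sum_congr (by norm_num) fun i hi => ?_
            have hij : i < j := by
              have := Finset.mem_range.mp hi; omega
            have hc : 1 + i ≤ j := by omega
            have he : 1 + i - 1 = i := by omega
            rw [hpval, if_pos hc, he]
          have e2 : ∑ m ∈ Finset.Ico (j+1) k, v (p m) = ∑ m ∈ Finset.Ico (j+1) k, v (σ m) := by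
            refine Finset.sum_congr rfl fun m hm => ?_
            obtain ⟨hm1, hm2⟩ := Finset.mem_Ico.mp hm
            have hc : ¬ m ≤ j := by omega
            rw [hpval, if_neg hc]
          rw [e1, e2]
          have hr : ∑ i ∈ Finset.range k, v (σ i)
              = ∑ i ∈ Finset.range j, v (σ i) + (v (σ j) + ∑ m ∈ Finset.Ico (j+1) k, v (σ m)) := by
            rw [Finset.range_eq_Ico,
              ← Finset.sum_Ico_consecutive (fun i => v (σ i)) (Nat.zero_le j) (by omega : j ≤ k),
              Finset.sum_eq_sum_Ico_succ_bot (by omega : j < k), ← Finset.range_eq_Ico]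
          rw [hr, hj0]
          abel
        rw [hsum2]
        calc ‖∑ i ∈ Finset.range k, v (σ i)‖ ≤ d := hbd k hk
          _ ≤ (d:ℝ) + 1 := by linarith
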